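/- Let (Ω,T) be a minimal subshift over a finite alphabet A with associated set of words W. Then the following are equivalent: (i) (Ω,T) satisfies (SET), i.e. for every subadditive function F: W → ℝ the limit lim_{|w|→∞} F(w)/|w| exists and equals inf_{n≥1} F^{(n)}; (ii) (Ω,T) satisfies (PQ), i.e. there is a constant C > 0 with ν(v) ≥ C for every nonempty v ∈ W. -/

import Mathlib

open Filter Topology

namespace SubshiftErgodic

variable {A : Type*}

/-- The shift map `T` on two-sided sequences over `A`: `(T ω) n = ω (n+1)`. -/
def shift (ω : ℤ → A) : ℤ → A := fun n => ω (n + 1)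

/-- The `n`-th power of the shift: `(shiftZ n ω) k = ω (k + n)`. -/
def shiftZ (n : ℤ) (ω : ℤ → A) : ℤ → A := fun k => ω (k + n)

/-- `Ω` is a subshift: a closed, shift-invariant subset of `A^ℤ`. -/
def IsSubshift [TopologicalSpace A] (Ω : Set (ℤ → A)) : Prop :=
  IsClosed Ω ∧ shift '' Ω = Ω

/-- Minimality: every orbit `{T^n ω : n ∈ ℤ}` is dense in `Ω`. -/
def IsMinimal [TopologicalSpace A] (Ω : Set (ℤ → A)) : Prop :=
  ∀ ω ∈ Ω, Ω ⊆ closure {ρ | ∃ n : ℤ, ρ = shiftZ n ω}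

/-- The finite word `w` occurs in the sequence `ω` at position `k`. -/
def OccursAt (w : List A) (ω : ℤ → A) (k : ℤ) : Prop :=
  ∀ i : Fin w.length, ω (k + (i : ℕ)) = w.get i

/-- The set `W = W(Ω)` of finite words occurring as factors of elements of `Ω`. -/
def words (Ω : Set (ℤ → A)) : Set (List A) :=
  {w | ∃ ω ∈ Ω, ∃ k : ℤ, OccursAt w ω k}

/-- `v` occurs as a factor of the finite word `w` at position `i`. -/
def OccursIn (v w : List A) (i : ℕ) : Prop :=
  i + v.length ≤ w.length ∧ v <+: w.drop i

/-- `♯_v(w)`: the number of occurrences of `v` as a factor of `w`. -/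
noncomputable def occ (v w : List A) : ℕ :=
  {i : ℕ | OccursIn v w i}.ncard

/-- `z` is a return word of `u` (relative to the set of words `W`). -/
def IsReturnWord (W : Set (List A)) (z u : List A) : Prop :=
  z ∈ W ∧ z ++ u ∈ W ∧ occ u (z ++ u) = 2 ∧ u <+: z ++ u

/-- The maximal number of pairwise disjoint occurrences of `v` as a factor of `w`. -/
noncomputable def maxDisjoint (v w : List A) : ℕ :=
  sSup {m : ℕ | ∃ s : Fin m → ℕ, (∀ i, OccursIn v w (s i)) ∧
    ∀ i j : Fin m, i < j → s i + v.length ≤ s j}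

/-- The filter expressing `|w| → ∞` along words `w ∈ W`. -/
def wordsFilter (W : Set (List A)) : Filter (List A) :=
  ⨅ L : ℕ, Filter.principal {w | w ∈ W ∧ L ≤ w.length}

/-- `lim_{|w| → ∞} g w = x` over `w ∈ W`: for every `ε > 0` there is `L` with
`‖g w - x‖ ≤ ε` for all `w ∈ W` with `|w| ≥ L`. -/
def TendstoWords {B : Type*} [SeminormedAddCommGroup B] (W : Set (List A))
    (g : List A → B) (x : B) : Prop :=
  ∀ ε : ℝ, 0 < ε → ∃ L : ℕ, ∀ w ∈ W, L ≤ w.length → ‖g w - x‖ ≤ ε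

/-- `liminf_{|w| → ∞} g w` over `w ∈ W`, valued in the extended reals. -/
noncomputable def liminfWords (W : Set (List A)) (g : List A → ℝ) : EReal :=
  Filter.liminf (fun w => (g w : EReal)) (wordsFilter W)

/-- `limsup_{|w| → ∞} g w` over `w ∈ W`, valued in the extended reals. -/
noncomputable def limsupWords (W : Set (List A)) (g : List A → ℝ) : EReal :=
  Filter.limsup (fun w => (g w : EReal)) (wordsFilter W)

/-- `ν(v) = liminf_{|w| → ∞} l_v(w)/|w|`, where
`l_v(w) = (max number of pairwise disjoint copies of v in w) ⬝ |v|`. -/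
noncomputable def nu (W : Set (List A)) (v : List A) : EReal :=
  liminfWords W (fun w => ((maxDisjoint v w * v.length : ℕ) : ℝ) / (w.length : ℝ))

/-- Condition (PQ): uniform positivity of quasiweights. -/
def PQ (W : Set (List A)) : Prop :=
  ∃ C : ℝ, 0 < C ∧ ∀ v ∈ W, v ≠ [] → (C : EReal) ≤ nu W v

/-- Unique ergodicity: all word frequencies `♯_v(w)/|w|` converge as `|w| → ∞`. -/
def UniquelyErgodic (Ω : Set (ℤ → A)) : Prop :=
  ∀ v ∈ words Ω, ∃ x : ℝ,
    TendstoWords (words Ω) (fun w => (occ v w : ℝ) / (w.length : ℝ)) x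

/-- `F : W → ℝ` is subadditive. -/
def IsSubadditive (W : Set (List A)) (F : List A → ℝ) : Prop :=
  ∀ a b : List A, a ∈ W → b ∈ W → a ++ b ∈ W → F (a ++ b) ≤ F a + F b

/-- `F^(n) = max { F v / |v| : v ∈ W, |v| = n }`. -/
noncomputable def wordSup (W : Set (List A)) (F : List A → ℝ) (n : ℕ) : ℝ :=
  sSup ((fun v => F v / (v.length : ℝ)) '' {v | v ∈ W ∧ v.length = n})

/-- Condition (SET): the uniform subadditive ergodic theorem holds, i.e. for every
subadditive `F` the limit `lim_{|w|→∞} F(w)/|w|` exists and equals `inf_{n ≥ 1} F^(n)`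
(in the extended reals). -/
def SET (W : Set (List A)) : Prop :=
  ∀ F : List A → ℝ, IsSubadditive W F →
    Filter.Tendsto (fun w => ((F w / (w.length : ℝ) : ℝ) : EReal)) (wordsFilter W)
      (nhds (⨅ n : {n : ℕ // 1 ≤ n}, ((wordSup W F n.1 : ℝ) : EReal)))

/-- A Banach-space-valued function `F : W → B` is additive. -/
def IsAdditive {B : Type*} [SeminormedAddCommGroup B] (W : Set (List A))
    (F : List A → B) : Prop :=
  ∃ D : ℝ, 0 < D ∧ ∃ c : ℕ → ℝ, Antitone c ∧ (∀ n, 0 ≤ c n) ∧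
    Filter.Tendsto c Filter.atTop (nhds 0) ∧
    (∀ vs : List (List A), (∀ v ∈ vs, v ∈ W) → vs.flatten ∈ W →
      ‖F vs.flatten - (vs.map F).sum‖ ≤ (vs.map fun v => c v.length * (v.length : ℝ)).sum) ∧
    ∀ v ∈ W, ‖F v‖ ≤ D * (v.length : ℝ)

/-- Condition (HP): powers in `W` have uniformly bounded exponent. -/
def HP (W : Set (List A)) : Prop :=
  ∃ N : ℕ, 0 < N ∧ ∀ v : List A, v ≠ [] → ∀ k : ℕ,
    (List.replicate k v).flatten ∈ W → k ≤ N

/-- Condition (PW): uniform positivity of weights. -/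
def PW (W : Set (List A)) : Prop :=
  ∃ E : ℝ, 0 < E ∧ ∀ v ∈ W, v ≠ [] →
    (E : EReal) ≤ liminfWords W (fun w => ((occ v w * v.length : ℕ) : ℝ) / (w.length : ℝ))

/-- Linear repetitivity. -/
def LinearlyRepetitive (W : Set (List A)) : Prop :=
  ∃ D : ℝ, 0 < D ∧ ∀ v ∈ W, v ≠ [] → ∀ w ∈ W, D * (v.length : ℝ) ≤ (w.length : ℝ) →
    v <:+: w

/-- Aperiodicity: no element of `Ω` is periodic. -/
def Aperiodic (Ω : Set (ℤ → A)) : Prop :=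
  ∀ ω ∈ Ω, ∀ p : ℕ, 1 ≤ p → shiftZ (p : ℤ) ω ≠ ω

/-- `m(n)`: the minimal length of a return word of a word of length `n` in `W`. -/
noncomputable def mRet (W : Set (List A)) (n : ℕ) : ℕ :=
  sInf {k : ℕ | ∃ v z : List A, v ∈ W ∧ v.length = n ∧ IsReturnWord W z v ∧ z.length = k}

/-- `k_ω^w`: the minimal nonnegative position at which `w` occurs in `ω`. -/
noncomputable def firstOcc (ω : ℤ → A) (w : List A) : ℕ :=
  sInf {k : ℕ | OccursAt w ω (k : ℤ)}

/-- `F_ω(w) = ∑_{j=0}^{|w|-1} f(T^{k_ω^w + j} ω)`. -/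
noncomputable def birkhoffF {B : Type*} [AddCommMonoid B] (f : (ℤ → A) → B)
    (ω : ℤ → A) (w : List A) : B :=
  ∑ j ∈ Finset.range w.length, f (shiftZ ((firstOcc ω w : ℤ) + (j : ℤ)) ω)

section Basic

variable {A : Type*}

lemma occursIn_refl (v : List A) : OccursIn v v 0 := by
  constructor
  · simp
  · simp

lemma occursAt_of_occursIn {w v : List A} {ω : ℤ → A} {k : ℤ} {j : ℕ}
    (h : OccursAt w ω k) (h2 : OccursIn v w j) : OccursAt v ω (k + (j : ℕ)) := by
  intro i
  obtain ⟨hlen, hpre⟩ := h2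
  have hi : (j + (i : ℕ)) < w.length := by
    have := i.isLt; omega
  have h1 : v.get i = w.get ⟨j + (i : ℕ), hi⟩ := by
    have := hpre.getElem (i := (i : ℕ)) (by simpa using i.isLt)
    simp only [List.get_eq_getElem]
    rw [show v[(i:ℕ)] = v[(i:ℕ)]'(i.isLt) from rfl] at this
    rw [this]
    simp [List.getElem_drop]
  rw [h1, ← h ⟨j + (i : ℕ), hi⟩]
  push_cast
  ring_nf

lemma mem_words_of_occursIn {Ω : Set (ℤ → A)} {w v : List A} {j : ℕ}
    (hw : w ∈ words Ω) (h : OccursIn v w j) : v ∈ words Ω := by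
  obtain ⟨ω, hω, k, hk⟩ := hw
  exact ⟨ω, hω, k + (j : ℕ), occursAt_of_occursIn hk h⟩

lemma occursIn_of_infix {v w : List A} (h : v <:+: w) : ∃ j, OccursIn v w j := by
  obtain ⟨s, t, rfl⟩ := h
  refine ⟨s.length, ?_, ?_⟩
  · simp
  · rw [List.append_assoc, List.drop_left]
    exact ⟨t, rfl⟩

lemma infix_mem_words {Ω : Set (ℤ → A)} {w v : List A}
    (hw : w ∈ words Ω) (h : v <:+: w) : v ∈ words Ω := by
  obtain ⟨j, hj⟩ := occursIn_of_infix h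
  exact mem_words_of_occursIn hw hj

lemma take_mem_words {Ω : Set (ℤ → A)} {w : List A} (hw : w ∈ words Ω) (n : ℕ) :
    w.take n ∈ words Ω :=
  infix_mem_words hw (List.take_prefix n w).isInfix

lemma drop_mem_words {Ω : Set (ℤ → A)} {w : List A} (hw : w ∈ words Ω) (n : ℕ) :
    w.drop n ∈ words Ω :=
  infix_mem_words hw (List.drop_suffix n w).isInfix

lemma exists_word_of_length {Ω : Set (ℤ → A)} (hne : Ω.Nonempty) (n : ℕ) :
    ∃ w ∈ words Ω, w.length = n := by
  obtain ⟨ω, hω⟩ := hne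
  refine ⟨List.ofFn (fun i : Fin n => ω (i : ℕ)), ⟨ω, hω, 0, ?_⟩, by simp⟩
  intro i
  simp [List.get_ofFn]

lemma occursIn_take {v u : List A} {R o : ℕ} (h : OccursIn v (u.take R) o) :
    OccursIn v u o := by
  obtain ⟨hlen, hpre⟩ := h
  constructor
  · simp only [List.length_take] at hlen; omega
  · rw [List.drop_take] at hpre
    exact hpre.trans (List.take_prefix _ _)

lemma occursIn_drop_of_occursIn {v u : List A} (hv : v ≠ []) {d o : ℕ}
    (h : OccursIn v (u.drop d) o) : OccursIn v u (d + o) := by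
  obtain ⟨hlen, hpre⟩ := h
  have hv' : 0 < v.length := List.length_pos_iff.2 hv
  constructor
  · simp only [List.length_drop] at hlen; omega
  · rwa [← List.drop_drop]

lemma occursIn_drop_sub {v u : List A} {d p : ℕ} (h : OccursIn v u p) (hd : d ≤ p) :
    OccursIn v (u.drop d) (p - d) := by
  obtain ⟨hlen, hpre⟩ := h
  constructor
  · simp only [List.length_drop]; omega
  · rw [List.drop_drop]
    rwa [show d + (p - d) = p by omega]

lemma occursIn_append_left {v a : List A} (b : List A) {i : ℕ} (h : OccursIn v a i) :
    OccursIn v (a ++ b) i := by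
  obtain ⟨hlen, hpre⟩ := h
  constructor
  · simp; omega
  · rw [List.drop_append_of_le_length (by omega)]
    exact hpre.trans (List.prefix_append _ _)

lemma occursIn_append_right {v b : List A} (a : List A) {i : ℕ} (h : OccursIn v b i) :
    OccursIn v (a ++ b) (a.length + i) := by
  obtain ⟨hlen, hpre⟩ := h
  constructor
  · simp; omega
  · rwa [List.drop_length_add_append]

lemma occursIn_self_append {v b : List A} : OccursIn v (v ++ b) 0 := by
  constructor
  · simp
  · simp

end Basic
section FilterLemmas

variable {A : Type*} {W : Set (List A)}

lemma wordsFilter_directed (W : Set (List A)) :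
    Directed (fun x1 x2 : Filter (List A) => x1 ≥ x2)
      (fun L : ℕ => Filter.principal {w | w ∈ W ∧ L ≤ w.length}) := by
  intro a b
  refine ⟨max a b, ?_, ?_⟩ <;>
  · simp only [ge_iff_le, Filter.le_principal_iff, Filter.mem_principal]
    intro w hw
    exact ⟨hw.1, by have := hw.2; omega⟩

lemma mem_wordsFilter {s : Set (List A)} :
    s ∈ wordsFilter W ↔ ∃ L : ℕ, ∀ w ∈ W, L ≤ w.length → w ∈ s := by
  rw [wordsFilter, Filter.mem_iInf_of_directed (wordsFilter_directed W)]
  simp only [Filter.mem_principal]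
  constructor
  · rintro ⟨L, hL⟩; exact ⟨L, fun w hw hl => hL ⟨hw, hl⟩⟩
  · rintro ⟨L, hL⟩; exact ⟨L, fun w hw => hL w hw.1 hw.2⟩

lemma eventually_wordsFilter {p : List A → Prop} :
    (∀ᶠ w in wordsFilter W, p w) ↔ ∃ L : ℕ, ∀ w ∈ W, L ≤ w.length → p w :=
  mem_wordsFilter

lemma wordsFilter_neBot (h : ∀ L : ℕ, ∃ w ∈ W, L ≤ w.length) :
    (wordsFilter W).NeBot := by
  refine Filter.iInf_neBot_of_directed (wordsFilter_directed W) (fun L => ?_)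
  rw [Filter.principal_neBot_iff]
  obtain ⟨w, hw, hl⟩ := h L
  exact ⟨w, hw, hl⟩

end FilterLemmas

section MaxDisjoint

variable {A : Type*}

/-- The set of sizes of disjoint packings of `v` in `w`. -/
def packings (v w : List A) : Set ℕ :=
  {m : ℕ | ∃ s : Fin m → ℕ, (∀ i, OccursIn v w (s i)) ∧
    ∀ i j : Fin m, i < j → s i + v.length ≤ s j}

lemma maxDisjoint_eq_sSup (v w : List A) : maxDisjoint v w = sSup (packings v w) := rfl

lemma mem_packings_iff {v w : List A} {m : ℕ} :
    m ∈ packings v w ↔ ∃ s : ℕ → ℕ, (∀ i, i < m → OccursIn v w (s i)) ∧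
      ∀ i j, i < j → j < m → s i + v.length ≤ s j := by
  constructor
  · rintro ⟨s, hocc, hord⟩
    refine ⟨fun n => if h : n < m then s ⟨n, h⟩ else 0, fun i hi => ?_, fun i j hij hj => ?_⟩
    · simp only [dif_pos hi]; exact hocc _
    · simp only [dif_pos (lt_trans hij hj), dif_pos hj]
      exact hord ⟨i, lt_trans hij hj⟩ ⟨j, hj⟩ (Fin.mk_lt_mk.2 hij)
  · rintro ⟨s, h1, h2⟩
    exact ⟨fun i => s i, fun i => h1 i i.isLt, fun i j hij => h2 i j hij j.isLt⟩

lemma zero_mem_packings (v w : List A) : 0 ∈ packings v w :=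
  mem_packings_iff.2 ⟨fun _ => 0, fun i hi => by omega, fun i j _ hj => by omega⟩

lemma packings_mul_le {v w : List A} (hv : v ≠ []) {m : ℕ} (hm : m ∈ packings v w) :
    m * v.length ≤ w.length := by
  obtain ⟨s, hocc, hord⟩ := mem_packings_iff.1 hm
  rcases Nat.eq_zero_or_pos m with rfl | hm0
  · simp
  have key : ∀ j, j < m → j * v.length ≤ s j := by
    intro j
    induction j with
    | zero => intro _; simp
    | succ n ih =>
      intro hj
      have h2 := hord n (n + 1) (by omega) hj
      have := ih (by omega)
      have : (n + 1) * v.length = n * v.length + v.length := by ring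
      omega
  have h1 := key (m - 1) (by omega)
  have h2 := (hocc (m - 1) (by omega)).1
  have : m * v.length = (m - 1) * v.length + v.length := by
    cases m with
    | zero => omega
    | succ n => simp [Nat.succ_sub_one]; ring
  omega

lemma packings_bddAbove {v w : List A} (hv : v ≠ []) : BddAbove (packings v w) := by
  refine ⟨w.length, fun m hm => ?_⟩
  have := packings_mul_le hv hm
  have hv' : 0 < v.length := List.length_pos_iff.2 hv
  calc m = m * 1 := (mul_one m).symm
    _ ≤ m * v.length := Nat.mul_le_mul_left m hv'
    _ ≤ w.length := this

lemma maxDisjoint_mem_packings {v w : List A} (hv : v ≠ []) :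
    maxDisjoint v w ∈ packings v w :=
  Nat.sSup_mem ⟨0, zero_mem_packings v w⟩ (packings_bddAbove hv)

lemma le_maxDisjoint {v w : List A} (hv : v ≠ []) {m : ℕ} (hm : m ∈ packings v w) :
    m ≤ maxDisjoint v w :=
  le_csSup (packings_bddAbove hv) hm

lemma maxDisjoint_mul_le {v w : List A} (hv : v ≠ []) :
    maxDisjoint v w * v.length ≤ w.length :=
  packings_mul_le hv (maxDisjoint_mem_packings hv)

lemma one_le_maxDisjoint_self {v : List A} (hv : v ≠ []) : 1 ≤ maxDisjoint v v :=
  le_maxDisjoint hv (mem_packings_iff.2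
    ⟨fun _ => 0, fun i hi => occursIn_refl v, fun i j hij hj => by omega⟩)

lemma maxDisjoint_superadd {v : List A} (hv : v ≠ []) (a b : List A) :
    maxDisjoint v a + maxDisjoint v b ≤ maxDisjoint v (a ++ b) := by
  obtain ⟨s1, ho1, hd1⟩ := mem_packings_iff.1 (maxDisjoint_mem_packings (v := v) (w := a) hv)
  obtain ⟨s2, ho2, hd2⟩ := mem_packings_iff.1 (maxDisjoint_mem_packings (v := v) (w := b) hv)
  set m1 := maxDisjoint v a with hm1
  set m2 := maxDisjoint v b with hm2
  refine le_maxDisjoint hv (mem_packings_iff.2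
    ⟨fun n => if n < m1 then s1 n else a.length + s2 (n - m1), fun i hi => ?_, fun i j hij hj => ?_⟩)
  · by_cases h : i < m1
    · simp only [if_pos h]
      exact occursIn_append_left b (ho1 i h)
    · simp only [if_neg h]
      exact occursIn_append_right a (ho2 (i - m1) (by omega))
  · by_cases hi : i < m1
    · by_cases hj' : j < m1
      · simp only [if_pos hi, if_pos hj']
        exact hd1 i j hij hj'
      · simp only [if_pos hi, if_neg hj']
        have := (ho1 i hi).1
        omega
    · have hj' : ¬ j < m1 := by omega
      simp only [if_neg hi, if_neg hj']
      have := hd2 (i - m1) (j - m1) (by omega) (by omega)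
      omega

lemma maxDisjoint_eq_zero_of_lt {v w : List A} (hv : v ≠ []) (h : w.length < v.length) :
    maxDisjoint v w = 0 := by
  rcases Nat.eq_zero_or_pos (maxDisjoint v w) with h0 | h0
  · exact h0
  obtain ⟨s, hocc, -⟩ := mem_packings_iff.1 (maxDisjoint_mem_packings (v := v) (w := w) hv)
  have := (hocc 0 h0).1
  omega

end MaxDisjoint
section Subadd

variable {A : Type*} [Fintype A]

/-- max(0, sup of F over short words): auxiliary constant. -/
noncomputable def capD (W : Set (List A)) (F : List A → ℝ) (m : ℕ) : ℝ :=
  sSup (F '' {u | u ∈ W ∧ 1 ≤ u.length ∧ u.length ≤ m}) ⊔ 0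

/-- The additive error constant in the block decomposition bound. -/
noncomputable def gapC (W : Set (List A)) (F : List A → ℝ) (m : ℕ) : ℝ :=
  m * |wordSup W F m| + capD W F m

variable {W : Set (List A)} {F : List A → ℝ}

lemma capD_nonneg (W : Set (List A)) (F : List A → ℝ) (m : ℕ) : 0 ≤ capD W F m :=
  le_max_right _ _

lemma gapC_nonneg (W : Set (List A)) (F : List A → ℝ) (m : ℕ) : 0 ≤ gapC W F m :=
  add_nonneg (mul_nonneg (Nat.cast_nonneg m) (abs_nonneg _)) (capD_nonneg W F m)

lemma finite_words_length_eq (W : Set (List A)) (n : ℕ) :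
    {v : List A | v ∈ W ∧ v.length = n}.Finite :=
  (List.finite_length_eq A n).subset (fun v hv => hv.2)

lemma finite_words_length_le (W : Set (List A)) (m : ℕ) :
    {u : List A | u ∈ W ∧ 1 ≤ u.length ∧ u.length ≤ m}.Finite :=
  (List.finite_length_le A m).subset (fun v hv => hv.2.2)

lemma div_le_wordSup {u : List A} {n : ℕ} (hu : u ∈ W) (hn : u.length = n) :
    F u / n ≤ wordSup W F n := by
  subst hn
  exact le_csSup (((finite_words_length_eq W u.length).image _).bddAbove) ⟨u, ⟨hu, rfl⟩, rfl⟩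

lemma F_le_wordSup {u : List A} {n : ℕ} (hn0 : 1 ≤ n) (hu : u ∈ W) (hn : u.length = n) :
    F u ≤ n * wordSup W F n := by
  have h := div_le_wordSup (F := F) hu hn
  have hn' : (0 : ℝ) < n := by exact_mod_cast hn0
  rw [div_le_iff₀ hn'] at h
  linarith

lemma wordSup_le {n : ℕ} {x : ℝ} (hne : ∃ w ∈ W, w.length = n)
    (h : ∀ u ∈ W, u.length = n → F u / n ≤ x) : wordSup W F n ≤ x := by
  refine csSup_le ?_ ?_
  · obtain ⟨w, hw, hl⟩ := hne; exact ⟨F w / w.length, w, ⟨hw, hl⟩, rfl⟩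
  · rintro y ⟨u, ⟨hu, hl⟩, rfl⟩
    have := h u hu hl
    show F u / (u.length : ℝ) ≤ x
    rwa [hl]

lemma F_le_capD {u : List A} {m : ℕ} (hu : u ∈ W) (h1 : 1 ≤ u.length) (h2 : u.length ≤ m) :
    F u ≤ capD W F m :=
  le_trans (le_csSup (((finite_words_length_le W m).image _).bddAbove) ⟨u, ⟨hu, h1, h2⟩, rfl⟩)
    (le_max_left _ _)

/-- Block decomposition bound: `F u ≤ |u| S(m) + c(m)` for all nonempty `u ∈ W`. -/
lemma blockBound (hinfix : ∀ {w v : List A}, w ∈ W → v <:+: w → v ∈ W)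
    (hsub : IsSubadditive W F) {m : ℕ} (hm : 1 ≤ m) :
    ∀ u, u ∈ W → 1 ≤ u.length → F u ≤ u.length * wordSup W F m + gapC W F m := by
  suffices H : ∀ N : ℕ, ∀ u, u ∈ W → 1 ≤ u.length → u.length ≤ N →
      F u ≤ u.length * wordSup W F m + gapC W F m by
    intro u hu h1; exact H u.length u hu h1 le_rfl
  intro N
  induction N using Nat.strong_induction_on with
  | _ N ih =>
    intro u hu h1 hN
    by_cases hum : u.length ≤ m
    · have hD := F_le_capD (F := F) hu h1 hum
      have habs : -(m * |wordSup W F m|) ≤ (u.length : ℝ) * wordSup W F m := by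
        have h1' : (u.length : ℝ) ≤ m := by exact_mod_cast hum
        have h0' : (0 : ℝ) ≤ u.length := Nat.cast_nonneg _
        have := neg_abs_le (wordSup W F m)
        have habs0 := abs_nonneg (wordSup W F m)
        nlinarith
      rw [gapC]
      linarith
    · push_neg at hum
      have htw : u.take m ∈ W := hinfix hu (List.take_prefix m u).isInfix
      have hdw : u.drop m ∈ W := hinfix hu (List.drop_suffix m u).isInfix
      have hcat : u.take m ++ u.drop m ∈ W := by rw [List.take_append_drop]; exact hu
      have hsplit := hsub (u.take m) (u.drop m) htw hdw hcat
      rw [List.take_append_drop] at hsplit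
      have hlt : u.length - m < N := by omega
      have hdl : (u.drop m).length = u.length - m := by simp
      have hF1 : F (u.take m) ≤ m * wordSup W F m :=
        F_le_wordSup hm htw (by simp; omega)
      have hF2 : F (u.drop m) ≤ (u.length - m : ℕ) * wordSup W F m + gapC W F m := by
        have := ih (u.length - m) hlt (u.drop m) hdw (by omega) (by omega)
        rwa [hdl] at this
      have hcast : ((u.length - m : ℕ) : ℝ) = (u.length : ℝ) - m := by
        have : m ≤ u.length := by omega
        push_cast [this]; ring
      rw [hcast] at hF2
      have : (u.length : ℝ) * wordSup W F m
          = m * wordSup W F m + ((u.length : ℝ) - m) * wordSup W F m := by ring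
      linarith

/-- Packing decomposition bound. -/
lemma packingBound (hinfix : ∀ {w v : List A}, w ∈ W → v <:+: w → v ∈ W)
    (hsub : IsSubadditive W F) {m : ℕ} (hm : 1 ≤ m) {v : List A} (hv : v ∈ W) (hv0 : v ≠ []) :
    ∀ k : ℕ, ∀ u, u ∈ W → 1 ≤ u.length → k ∈ packings v u →
      F u ≤ k * F v + ((u.length : ℝ) - k * v.length) * wordSup W F m
        + (k + 1) * gapC W F m := by
  intro k
  induction k with
  | zero =>
    intro u hu h1 _
    have := blockBound hinfix hsub hm u hu h1
    push_cast
    linarith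
  | succ k ihk =>
    intro u hu h1 hpack
    obtain ⟨s, hocc, hord⟩ := mem_packings_iff.1 hpack
    set p := s 0 with hp
    have hocc0 := hocc 0 (by omega)
    have hplen : p + v.length ≤ u.length := hocc0.1
    obtain ⟨t, ht⟩ := hocc0.2
    have hdropp0 : u.drop p = v ++ t := ht.symm
    -- u.drop p = v ++ r with r = u.drop (p + v.length)
    have hr : u.drop (p + v.length) = t := by
      have h2 := congrArg (List.drop v.length) hdropp0
      rw [List.drop_drop] at h2
      simp only [List.drop_left] at h2
      first
      | exact h2
      | (rw [Nat.add_comm]; exact h2)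
    set r := u.drop (p + v.length) with hrdef
    have hdropp : u.drop p = v ++ r := by rw [hr]; exact hdropp0
    have hvlen : 0 < v.length := List.length_pos_iff.2 hv0
    have hrw : r ∈ W := hinfix hu (List.drop_suffix _ u).isInfix
    have hdw : u.drop p ∈ W := hinfix hu (List.drop_suffix _ u).isInfix
    have hgw : u.take p ∈ W := hinfix hu (List.take_prefix _ u).isInfix
    have hulen : u.length = p + v.length + r.length := by
      have : r.length = u.length - (p + v.length) := by rw [hrdef]; simp
      omega
    -- new packing of size k in r
    have hpack' : k ∈ packings v r := by
      refine mem_packings_iff.2 ⟨fun i => s (i + 1) - (p + v.length), fun i hi => ?_,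
        fun i j hij hj => ?_⟩
      · have h01 : s 0 + v.length ≤ s (i + 1) := hord 0 (i + 1) (by omega) (by omega)
        have hle : p + v.length ≤ s (i + 1) := by omega
        exact occursIn_drop_sub (hocc (i + 1) (by omega)) hle
      · have hij' := hord (i + 1) (j + 1) (by omega) (by omega)
        have h01 : s 0 + v.length ≤ s (i + 1) := hord 0 (i + 1) (by omega) (by omega)
        show s (i + 1) - (p + v.length) + v.length ≤ s (j + 1) - (p + v.length)
        omega
    -- case analysis
    by_cases hrnil : r = []
    · -- then k = 0 and u = u.take p ++ v
      have hk0 : k = 0 := by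
        by_contra hk
        obtain ⟨s', hocc', -⟩ := mem_packings_iff.1 hpack'
        have h3 := (hocc' 0 (by omega)).1
        rw [hrnil] at h3
        simp only [List.length_nil] at h3
        omega
      subst hk0
      rw [hrnil, List.append_nil] at hdropp
      by_cases hp0 : p = 0
      · -- u = v
        have huv : u = v := by rw [← hdropp, hp0]; simp
        rw [huv]
        have hc := gapC_nonneg W F m
        have : (u.length : ℝ) = v.length := by rw [huv]
        push_cast
        nlinarith
      · have hgne : 1 ≤ (u.take p).length := by
          simp only [List.length_take]
          omega
        have hcat : u.take p ++ u.drop p ∈ W := by rw [List.take_append_drop]; exact hu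
        have hsplit := hsub (u.take p) (u.drop p) hgw hdw hcat
        rw [List.take_append_drop] at hsplit
        have hFg := blockBound hinfix hsub hm (u.take p) hgw hgne
        rw [hdropp] at hsplit
        have hglen : (u.take p).length = p := by simp; omega
        have hc := gapC_nonneg W F m
        rw [hglen] at hFg
        have hcast : (u.length : ℝ) = p + v.length := by
          rw [hulen, hrnil]; push_cast; simp
        push_cast
        rw [hcast]
        nlinarith
    · -- r ≠ []
      have hrlen : 1 ≤ r.length := List.length_pos_iff.2 hrnil
      have hFr := ihk r hrw hrlen hpack'
      have hvr : v ++ r ∈ W := by rw [← hdropp]; exact hdw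
      have hFvr : F (v ++ r) ≤ F v + F r := hsub v r hv hrw hvr
      have hc := gapC_nonneg W F m
      by_cases hp0 : p = 0
      · have huvr : u = v ++ r := by rw [← hdropp, hp0]; simp
        have hFu : F u ≤ F v + F r := by rw [huvr]; exact hFvr
        have hcast : (u.length : ℝ) = v.length + r.length := by
          rw [hulen, hp0]; push_cast; ring
        push_cast
        rw [hcast]
        push_cast at hFr
        nlinarith
      · have hcat : u.take p ++ u.drop p ∈ W := by rw [List.take_append_drop]; exact hu
        have hsplit := hsub (u.take p) (u.drop p) hgw hdw hcat
        rw [List.take_append_drop] at hsplit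
        have hgne : 1 ≤ (u.take p).length := by simp; omega
        have hFg := blockBound hinfix hsub hm (u.take p) hgw hgne
        have hglen : (u.take p).length = p := by simp; omega
        rw [hglen] at hFg
        have hFdrop : F (u.drop p) ≤ F v + F r := by rw [hdropp]; exact hFvr
        have hcast : (u.length : ℝ) = p + v.length + r.length := by
          rw [hulen]; push_cast; ring
        push_cast
        rw [hcast]
        push_cast at hFr
        nlinarith
  
end Subadd
section PQtoSET

variable {A : Type*} [Fintype A]

/-- Eventual upper bound from the block decomposition. -/
lemma upper_eventually {W : Set (List A)} {F : List A → ℝ}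
    (hinfix : ∀ {w v : List A}, w ∈ W → v <:+: w → v ∈ W)
    (hsub : IsSubadditive W F) {m : ℕ} (hm : 1 ≤ m) {δ : ℝ} (hδ : 0 < δ) :
    ∃ L : ℕ, ∀ w ∈ W, L ≤ w.length → F w / w.length ≤ wordSup W F m + δ := by
  refine ⟨⌈gapC W F m / δ⌉₊ + 1, fun w hw hL => ?_⟩
  have h1 : 1 ≤ w.length := by omega
  have hw0 : (0 : ℝ) < w.length := by exact_mod_cast h1
  have hB := blockBound hinfix hsub hm w hw h1
  rw [div_le_iff₀ hw0]
  have hgap : gapC W F m ≤ δ * w.length := by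
    have h2 : gapC W F m / δ ≤ ⌈gapC W F m / δ⌉₊ := Nat.le_ceil _
    have h3 : (⌈gapC W F m / δ⌉₊ : ℝ) + 1 ≤ (w.length : ℝ) := by exact_mod_cast hL
    rw [div_le_iff₀ hδ] at h2
    nlinarith
  nlinarith

set_option maxHeartbeats 1000000 in
theorem PQ_imp_SET {Ω : Set (ℤ → A)} (hne : Ω.Nonempty) :
    PQ (words Ω) → SET (words Ω) := by
  rintro ⟨C0, hC0, hPQ0⟩
  set W := words Ω with hW
  have hinfix : ∀ {w v : List A}, w ∈ W → v <:+: w → v ∈ W :=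
    fun hw h => infix_mem_words hw h
  have hlen : ∀ n : ℕ, ∃ w ∈ W, w.length = n := exists_word_of_length hne
  -- normalize the constant
  set C := min C0 1 with hCdef
  have hC : 0 < C := lt_min hC0 one_pos
  have hC1 : C ≤ 1 := min_le_right _ _
  have hPQ : ∀ v ∈ W, v ≠ [] → (C : EReal) ≤ nu W v := by
    intro v hv hv0
    refine le_trans ?_ (hPQ0 v hv hv0)
    exact_mod_cast EReal.coe_le_coe_iff.2 (min_le_left _ _)
  intro F hsub
  set Λ : EReal := ⨅ n : {n : ℕ // 1 ≤ n}, ((wordSup W F n.1 : ℝ) : EReal) with hΛdef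
  by_cases hbot : Λ = ⊥
  · rw [hbot]
    rw [EReal.tendsto_nhds_bot_iff_real]
    intro x
    have : ∃ n : {n : ℕ // 1 ≤ n}, ((wordSup W F n.1 : ℝ) : EReal) < ((x - 1 : ℝ) : EReal) := by
      have := (iInf_eq_bot (f := fun n : {n : ℕ // 1 ≤ n} => ((wordSup W F n.1 : ℝ) : EReal))).1
        (by rw [← hΛdef]; exact hbot) ((x - 1 : ℝ) : EReal) (EReal.bot_lt_coe _)
      exact this
    obtain ⟨⟨n, hn1⟩, hlt⟩ := this
    rw [EReal.coe_lt_coe_iff] at hlt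
    obtain ⟨L, hL⟩ := upper_eventually hinfix hsub hn1 (δ := 1/2) (by norm_num)
    rw [eventually_wordsFilter]
    refine ⟨L, fun w hw hLw => ?_⟩
    have := hL w hw hLw
    have : F w / w.length < x := by linarith
    exact_mod_cast EReal.coe_lt_coe_iff.2 this
  · -- Λ is a real number
    have hntop : Λ ≠ ⊤ := by
      have h1 : Λ ≤ ((wordSup W F 1 : ℝ) : EReal) := iInf_le (fun n : {n : ℕ // 1 ≤ n} => ((wordSup W F n.1 : ℝ) : EReal)) ⟨1, le_rfl⟩
      exact (h1.trans_lt (EReal.coe_lt_top _)).ne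
    set lam : ℝ := Λ.toReal with hlamdef
    have hΛ : Λ = (lam : EReal) := (EReal.coe_toReal hntop hbot).symm
    have hle : ∀ n : ℕ, 1 ≤ n → lam ≤ wordSup W F n := by
      intro n hn
      have h1 : Λ ≤ ((wordSup W F n : ℝ) : EReal) := iInf_le (fun n : {n : ℕ // 1 ≤ n} => ((wordSup W F n.1 : ℝ) : EReal)) ⟨n, hn⟩
      rw [hΛ, EReal.coe_le_coe_iff] at h1
      exact h1
    have hex : ∀ δ : ℝ, 0 < δ → ∃ n : ℕ, 1 ≤ n ∧ wordSup W F n < lam + δ := by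
      intro δ hδ
      by_contra hcon
      push_neg at hcon
      have : ((lam + δ : ℝ) : EReal) ≤ Λ := by
        rw [hΛdef]
        refine le_iInf fun n => ?_
        exact EReal.coe_le_coe_iff.2 (hcon n.1 n.2)
      rw [hΛ, EReal.coe_le_coe_iff] at this
      linarith
    -- the lower bound
    have hlower : ∀ ε : ℝ, 0 < ε → ∃ L : ℕ, ∀ w ∈ W, L ≤ w.length →
        lam - ε ≤ F w / w.length := by
      intro ε hε
      obtain ⟨m, hm1, hSm⟩ := hex (C * ε / 8) (by positivity)
      set c := gapC W F m with hcdef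
      have hc0 : 0 ≤ c := gapC_nonneg W F m
      refine ⟨⌈16 * (c + 1) / (C * ε)⌉₊ + 1, fun w hw hLw => ?_⟩
      by_contra hbad
      push_neg at hbad
      have hw1 : 1 ≤ w.length := by omega
      have hwpos : (0 : ℝ) < w.length := by exact_mod_cast hw1
      have hFw : F w < (lam - ε) * w.length := by
        rw [div_lt_iff₀ hwpos] at hbad
        linarith
      have hwne : w ≠ [] := by intro h; rw [h] at hw1; simp at hw1
      -- length of w is large
      have hwlarge : 16 * c ≤ C * ε * w.length := by
        have h2 : 16 * (c + 1) / (C * ε) ≤ (⌈16 * (c + 1) / (C * ε)⌉₊ : ℝ) := Nat.le_ceil _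
        have h3 : (⌈16 * (c + 1) / (C * ε)⌉₊ : ℝ) + 1 ≤ (w.length : ℝ) := by exact_mod_cast hLw
        have hCε : (0 : ℝ) < C * ε := by positivity
        rw [div_le_iff₀ hCε] at h2
        nlinarith
      -- from PQ, eventually high packing density
      have hliminf : ((C / 2 : ℝ) : EReal) < nu W w := by
        refine lt_of_lt_of_le ?_ (hPQ w hw hwne)
        exact_mod_cast EReal.coe_lt_coe_iff.2 (by linarith)
      have hev : ∀ᶠ u in wordsFilter W, ((C / 2 : ℝ) : EReal) <
          (((maxDisjoint w u * w.length : ℕ) : ℝ) / (u.length : ℝ) : ℝ) := by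
        have := Filter.eventually_lt_of_lt_liminf (u := fun u =>
          ((((maxDisjoint w u * w.length : ℕ) : ℝ) / (u.length : ℝ) : ℝ) : EReal)) hliminf
        filter_upwards [this] with u hu
        exact_mod_cast hu
      rw [eventually_wordsFilter] at hev
      obtain ⟨L0, hL0⟩ := hev
      -- pick a large n and a word u of length n
      set n := max (max L0 m) (2 * w.length + 1) with hndef
      obtain ⟨u, hu, hun⟩ := hlen n
      have hnL0 : L0 ≤ n := le_trans (le_max_left _ _) (le_max_left _ _)
      have hnw : 2 * w.length + 1 ≤ n := le_max_right _ _
      have hn1 : 1 ≤ n := by omega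
      have hnpos : (0 : ℝ) < n := by exact_mod_cast hn1
      -- the packing bound for every word of length n gives a contradiction
      have hkey : ∀ z ∈ W, z.length = n → F z / n ≤ lam - C * ε / 4 := by
        intro z hz hzn
        set k := maxDisjoint w z with hkdef
        have hdens := hL0 z hz (by omega)
        rw [EReal.coe_lt_coe_iff, hzn] at hdens
        have hkw : C / 2 * n < (k : ℝ) * w.length := by
          rw [lt_div_iff₀ hnpos] at hdens
          push_cast at hdens
          linarith
        have hkn : (k : ℝ) * w.length ≤ n := by
          have := maxDisjoint_mul_le (v := w) (w := z) hwne
          rw [hzn] at this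
          exact_mod_cast this
        have hz1 : 1 ≤ z.length := by omega
        have hpb := packingBound hinfix hsub hm1 hw hwne k z hz hz1
          (maxDisjoint_mem_packings hwne)
        rw [hzn] at hpb
        rw [← hcdef] at hpb
        -- assemble
        have hk0 : (0 : ℝ) ≤ k := Nat.cast_nonneg k
        set θ : ℝ := (k : ℝ) * w.length with hθdef
        have hθ0 : (0 : ℝ) ≤ θ := by
          rw [hθdef]; positivity
        have hA : (k : ℝ) * F w ≤ θ * (lam - ε) := by
          have h4 := mul_le_mul_of_nonneg_left (le_of_lt hFw) hk0
          have h5 : (k : ℝ) * ((lam - ε) * w.length) = θ * (lam - ε) := by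
            rw [hθdef]; ring
          linarith
        have hB : ((n : ℝ) - θ) * wordSup W F m
            ≤ ((n : ℝ) - θ) * (lam + C * ε / 8) := by
          apply mul_le_mul_of_nonneg_left (le_of_lt hSm)
          linarith
        have hCc : ((k : ℝ) + 1) * c ≤ n * (C * ε / 8) := by
          have hkw1 : ((k : ℝ) + 1) * w.length ≤ 2 * n := by
            have hwn : (w.length : ℝ) ≤ n := by
              have : (2 * w.length + 1 : ℝ) ≤ n := by exact_mod_cast hnw
              linarith
            linarith
          have hint1 := mul_le_mul_of_nonneg_left hwlarge
            (by positivity : (0 : ℝ) ≤ (k : ℝ) + 1)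
          have hint2 := mul_le_mul_of_nonneg_left hkw1
            (by positivity : (0 : ℝ) ≤ C * ε)
          nlinarith [hint1, hint2]
        have hsum : F z ≤ θ * (lam - ε) + ((n : ℝ) - θ) * (lam + C * ε / 8)
            + n * (C * ε / 8) := by linarith
        have expand : θ * (lam - ε) + ((n : ℝ) - θ) * (lam + C * ε / 8) + n * (C * ε / 8)
            = n * lam + 2 * (n * (C * ε / 8)) - θ * ε - θ * (C * ε / 8) := by ring
        have h6 : 0 ≤ θ * (C * ε / 8) := by positivity
        have h7 : C / 2 * n * ε ≤ θ * ε :=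
          mul_le_mul_of_nonneg_right (le_of_lt hkw) (le_of_lt hε)
        have final_eq : n * lam + 2 * (n * (C * ε / 8)) - C / 2 * n * ε - 0
            = (n : ℝ) * (lam - C * ε / 4) := by ring
        have hfinal : F z ≤ n * (lam - C * ε / 4) := by linarith
        rw [div_le_iff₀ hnpos]
        linarith
      have hSn : wordSup W F n ≤ lam - C * ε / 4 := wordSup_le (hlen n) hkey
      have h8 := hle n hn1
      have hp : 0 < C * ε := mul_pos hC hε
      linarith
    -- assemble the tendsto
    rw [hΛ, EReal.tendsto_coe, Metric.tendsto_nhds]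
    intro ε hε
    obtain ⟨m, hm1, hSm⟩ := hex (ε / 4) (by linarith)
    obtain ⟨L1, hL1⟩ := upper_eventually hinfix hsub hm1 (δ := ε / 4) (by linarith)
    obtain ⟨L2, hL2⟩ := hlower (ε / 2) (by linarith)
    rw [eventually_wordsFilter]
    refine ⟨max L1 L2, fun w hw hLw => ?_⟩
    have h1 := hL1 w hw (le_trans (le_max_left _ _) hLw)
    have h2 := hL2 w hw (le_trans (le_max_right _ _) hLw)
    rw [Real.dist_eq, abs_sub_lt_iff]
    constructor <;> linarith

end PQtoSET
section Minimality

variable {A : Type*}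

lemma shiftZ_zero (ω : ℤ → A) : shiftZ 0 ω = ω := by
  funext k; simp [shiftZ]

lemma shift_eq_shiftZ_one : (shift : (ℤ → A) → (ℤ → A)) = shiftZ 1 := rfl

lemma shiftZ_mem {Ω : Set (ℤ → A)} [TopologicalSpace A] (hΩ : IsSubshift Ω)
    {ω : ℤ → A} (hω : ω ∈ Ω) (n : ℤ) : shiftZ n ω ∈ Ω := by
  have hfwd : ∀ x ∈ Ω, shift x ∈ Ω := by
    intro x hx
    rw [← hΩ.2]
    exact Set.mem_image_of_mem _ hx
  have hbwd : ∀ x ∈ Ω, shiftZ (-1) x ∈ Ω := by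
    intro x hx
    rw [← hΩ.2] at hx
    obtain ⟨y, hy, rfl⟩ := hx
    have : shiftZ (-1) (shift y) = y := by
      funext k; simp [shiftZ, shift]
    rw [this]; exact hy
  induction n using Int.induction_on with
  | zero => rw [shiftZ_zero]; exact hω
  | succ n ih =>
    have : shiftZ ((n : ℤ) + 1) ω = shift (shiftZ n ω) := by
      funext k; simp [shiftZ, shift]; ring_nf
    rw [this]; exact hfwd _ ih
  | pred n ih =>
    have : shiftZ (-(n : ℤ) - 1) ω = shiftZ (-1) (shiftZ (-n) ω) := by
      funext k; simp [shiftZ]; ring_nf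
    rw [this]; exact hbwd _ ih

lemma occursAt_shiftZ {v : List A} {ω : ℤ → A} {n k : ℤ}
    (h : OccursAt v ω (k + n)) : OccursAt v (shiftZ n ω) k := by
  intro i
  have := h i
  rw [← this]
  simp [shiftZ]; ring_nf

lemma occursAt_shiftZ' {v : List A} {ω : ℤ → A} {n k : ℤ}
    (h : OccursAt v (shiftZ n ω) k) : OccursAt v ω (k + n) := by
  intro i
  have := h i
  rw [← this]
  simp [shiftZ]; ring_nf

/-- Extract an `OccursIn` from two pointwise occurrences. -/
lemma occursIn_of_occursAt_pair {u v : List A} {ω : ℤ → A} {k : ℤ} {j : ℕ}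
    (hu : OccursAt u ω k) (hv : OccursAt v ω (k + (j : ℕ)))
    (hj : j + v.length ≤ u.length) : OccursIn v u j := by
  refine ⟨hj, ?_⟩
  rw [List.prefix_iff_eq_take]
  refine List.ext_getElem ?_ ?_
  · rw [List.length_take, List.length_drop]
    omega
  · intro i h1 h2
    have hiu : j + i < u.length := by omega
    have h3 := hv ⟨i, h1⟩
    have h4 := hu ⟨j + i, hiu⟩
    simp only [List.get_eq_getElem] at h3 h4
    rw [List.getElem_take, List.getElem_drop]
    rw [← h4, ← h3]
    congr 1
    push_cast
    ring

variable [Fintype A] [TopologicalSpace A] [DiscreteTopology A]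

lemma isOpen_occursAt (v : List A) (p : ℤ) : IsOpen {ρ : ℤ → A | OccursAt v ρ p} := by
  have : {ρ : ℤ → A | OccursAt v ρ p}
      = ⋂ i : Fin v.length, (fun ρ : ℤ → A => ρ (p + (i : ℕ)))⁻¹' {v.get i} := by
    ext ρ
    simp [OccursAt, Set.mem_iInter]
  rw [this]
  exact isOpen_iInter_of_finite fun i =>
    (continuous_apply (p + (i : ℕ))).isOpen_preimage _ (isOpen_discrete _)

/-- Minimality implies every word occurs in all sufficiently long words. -/
lemma occurrence_syndetic {Ω : Set (ℤ → A)} (hΩ : IsSubshift Ω) (hmin : IsMinimal Ω)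
    {v : List A} (hv : v ∈ words Ω) :
    ∃ R : ℕ, 1 ≤ R ∧ ∀ u ∈ words Ω, R ≤ u.length → ∃ j, OccursIn v u j := by
  by_contra hcon
  push_neg at hcon
  -- for every n, find a long word with no occurrence of v, and center it
  have hbad : ∀ n : ℕ, ∃ ρ ∈ Ω, ∀ p : ℤ, -(n : ℤ) ≤ p → p ≤ n → ¬ OccursAt v ρ p := by
    intro n
    obtain ⟨u, hu, hlen, hfree⟩ := hcon (2 * n + v.length + 1) (by omega)
    obtain ⟨ω, hω, k, hk⟩ := hu
    refine ⟨shiftZ (k + n) ω, shiftZ_mem hΩ hω _, fun p hp1 hp2 hocc => ?_⟩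
    have hocc' : OccursAt v ω (p + (k + n)) := occursAt_shiftZ' hocc
    have hjnat : p + n = ((p + n).toNat : ℤ) := by omega
    set j : ℕ := (p + n).toNat with hjdef
    have : OccursAt v ω (k + (j : ℕ)) := by
      have : p + (k + (n : ℤ)) = k + (j : ℕ) := by omega
      rwa [this] at hocc'
    have hjle : j + v.length ≤ u.length := by omega
    exact hfree j (occursIn_of_occursAt_pair hk this hjle)
  choose ρ hρΩ hρfree using hbad
  -- cluster point of the sequence ρ
  have hcomp : IsCompact Ω := hΩ.1.isCompact
  have hle : Filter.map ρ Filter.atTop ≤ Filter.principal Ω := by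
    rw [Filter.le_principal_iff, Filter.mem_map]
    exact Filter.Eventually.of_forall fun n => hρΩ n
  obtain ⟨σ, hσΩ, hclus⟩ := hcomp.exists_clusterPt hle
  -- v never occurs in σ
  have hfree : ∀ p : ℤ, ¬ OccursAt v σ p := by
    intro p hocc
    have hU : {ρ' : ℤ → A | OccursAt v ρ' p} ∈ nhds σ :=
      (isOpen_occursAt v p).mem_nhds hocc
    have hT : ρ '' Set.Ici p.natAbs ∈ Filter.map ρ Filter.atTop := by
      rw [Filter.mem_map]
      filter_upwards [Filter.mem_atTop p.natAbs] with n hn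
      exact Set.mem_image_of_mem _ hn
    have hne := (Filter.inf_neBot_iff.1 hclus.neBot) hU hT
    obtain ⟨x, hx1, n, hn, rfl⟩ := hne
    have hn' : p.natAbs ≤ n := hn
    refine hρfree n (p := p) (by omega) (by omega) hx1
  -- but v occurs somewhere in Ω, contradicting minimality
  obtain ⟨ω', hω', k', hk'⟩ := hv
  have hsub : Ω ⊆ closure {τ | ∃ m : ℤ, τ = shiftZ m σ} := hmin σ hσΩ
  have hmem := hsub hω'
  rw [mem_closure_iff] at hmem
  obtain ⟨τ, hτocc, m, rfl⟩ := hmem _ (isOpen_occursAt v k') hk'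
  exact hfree (k' + m) (occursAt_shiftZ' hτocc)

/-- Minimality implies positivity of `ν(v)` for each fixed `v`. -/
lemma nu_pos {Ω : Set (ℤ → A)} (hΩ : IsSubshift Ω) (hmin : IsMinimal Ω)
    {v : List A} (hv : v ∈ words Ω) (hv0 : v ≠ []) :
    ∃ c : ℝ, 0 < c ∧ (c : EReal) ≤ nu (words Ω) v := by
  obtain ⟨R0, hR0, hsynd⟩ := occurrence_syndetic hΩ hmin hv
  set R := max R0 v.length with hRdef
  have hR1 : 1 ≤ R := le_trans hR0 (le_max_left _ _)
  have hvlen : 0 < v.length := List.length_pos_iff.2 hv0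
  refine ⟨v.length / (2 * R), by positivity, ?_⟩
  rw [nu, liminfWords]
  refine Filter.le_liminf_of_le (by isBoundedDefault) ?_
  rw [eventually_wordsFilter]
  refine ⟨R, fun u hu hRu => ?_⟩
  set q := u.length / R with hqdef
  have hq1 : 1 ≤ q := by
    rw [hqdef]; exact Nat.one_le_div_iff (by omega) |>.2 hRu
  -- build a packing of q disjoint copies of v
  have hocc : ∀ j, j < q → ∃ o : ℕ, OccursIn v u (j * R + o) ∧ o + v.length ≤ R := by
    intro j hj
    have hblen : ((u.drop (j * R)).take R).length = R := by
      rw [List.length_take, List.length_drop]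
      have : (j + 1) * R ≤ u.length := by
        calc (j + 1) * R ≤ q * R := Nat.mul_le_mul_right R hj
          _ ≤ u.length := Nat.div_mul_le_self u.length R
      have : j * R + R ≤ u.length := by nlinarith
      omega
    have hbin : (u.drop (j * R)).take R ∈ words Ω :=
      infix_mem_words (drop_mem_words hu _) (List.take_prefix _ _).isInfix
    obtain ⟨o, ho⟩ := hsynd _ hbin (by rw [hblen]; exact le_max_left _ _)
    have holen : o + v.length ≤ R := by
      have := ho.1; rwa [hblen] at this
    exact ⟨o, occursIn_drop_of_occursIn hv0 (occursIn_take ho), holen⟩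
  choose o ho1 ho2 using hocc
  have hpack : q ∈ packings v u := by
    refine mem_packings_iff.2 ⟨fun j => if h : j < q then j * R + o j h else 0,
      fun j hj => ?_, fun i j hij hj => ?_⟩
    · show OccursIn v u (if h : j < q then j * R + o j h else 0)
      rw [dif_pos hj]; exact ho1 j hj
    · show (if h : i < q then i * R + o i h else 0) + v.length
          ≤ (if h : j < q then j * R + o j h else 0)
      rw [dif_pos (lt_trans hij hj), dif_pos hj]
      have h2 := ho2 i (lt_trans hij hj)
      have : (i + 1) * R ≤ j * R := Nat.mul_le_mul_right R hij
      nlinarith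
  have hqle : q ≤ maxDisjoint v u := le_maxDisjoint hv0 hpack
  -- density bound
  have hupos : (0 : ℝ) < u.length := by
    have : 1 ≤ u.length := le_trans hR1 hRu
    exact_mod_cast this
  have hkey : (v.length : ℝ) / (2 * R) ≤ ((maxDisjoint v u * v.length : ℕ) : ℝ) / u.length := by
    rw [div_le_div_iff₀ (by positivity) hupos]
    have hu2q : (u.length : ℝ) ≤ 2 * q * R := by
      have h5 : u.length < (q + 1) * R := by
        have h1 := Nat.div_add_mod u.length R
        have h2 := Nat.mod_lt u.length (show 0 < R by omega)
        rw [hqdef]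
        nlinarith [h1, h2]
      have h6 : (q + 1) * R ≤ 2 * q * R := by nlinarith
      have : u.length < 2 * q * R := lt_of_lt_of_le h5 h6
      exact_mod_cast this.le
    have hmq : (q : ℝ) * v.length ≤ ((maxDisjoint v u * v.length : ℕ) : ℝ) := by
      push_cast
      have : q * v.length ≤ maxDisjoint v u * v.length := Nat.mul_le_mul_right _ hqle
      exact_mod_cast this
    nlinarith [hmq, hu2q]
  exact EReal.coe_le_coe_iff.2 hkey

end Minimality
section MixedPack

variable {A : Type*}

/-- Total lengths of mixed packings of `w` by words of the family `V`. -/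
def mixedSet (V : ℕ → List A) (w : List A) : Set ℕ :=
  {c : ℕ | ∃ (m : ℕ) (s idx : ℕ → ℕ),
    (∀ i, i < m → OccursIn (V (idx i)) w (s i)) ∧
    (∀ i j, i < j → j < m → s i + (V (idx i)).length ≤ s j) ∧
    c = ∑ i ∈ Finset.range m, (V (idx i)).length}

/-- The maximal total length covered by a mixed packing. -/
noncomputable def mixedPack (V : ℕ → List A) (w : List A) : ℕ :=
  sSup (mixedSet V w)

lemma zero_mem_mixedSet (V : ℕ → List A) (w : List A) : 0 ∈ mixedSet V w :=
  ⟨0, fun _ => 0, fun _ => 0, fun i hi => by omega, fun i j _ hj => by omega, by simp⟩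

lemma mixedSet_le {V : ℕ → List A} {w : List A} {c : ℕ} (hc : c ∈ mixedSet V w) :
    c ≤ w.length := by
  obtain ⟨m, s, idx, hocc, hord, rfl⟩ := hc
  rcases Nat.eq_zero_or_pos m with rfl | hm
  · simp
  have key : ∀ i, i < m →
      ∑ i' ∈ Finset.range (i + 1), (V (idx i')).length ≤ s i + (V (idx i)).length := by
    intro i
    induction i with
    | zero => intro _; simp
    | succ n ih =>
      intro hn
      have h1 := ih (by omega)
      have h2 := hord n (n + 1) (by omega) hn
      rw [Finset.sum_range_succ]
      omega
  have h1 := key (m - 1) (by omega)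
  have h2 := (hocc (m - 1) (by omega)).1
  have h3 : m - 1 + 1 = m := by omega
  rw [h3] at h1
  omega

lemma mixedSet_bddAbove (V : ℕ → List A) (w : List A) : BddAbove (mixedSet V w) :=
  ⟨w.length, fun _ hc => mixedSet_le hc⟩

lemma mixedPack_le (V : ℕ → List A) (w : List A) : mixedPack V w ≤ w.length :=
  mixedSet_le (Nat.sSup_mem ⟨0, zero_mem_mixedSet V w⟩ (mixedSet_bddAbove V w))

lemma mixedPack_mem (V : ℕ → List A) (w : List A) : mixedPack V w ∈ mixedSet V w :=
  Nat.sSup_mem ⟨0, zero_mem_mixedSet V w⟩ (mixedSet_bddAbove V w)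

lemma le_mixedPack {V : ℕ → List A} {w : List A} {c : ℕ} (hc : c ∈ mixedSet V w) :
    c ≤ mixedPack V w :=
  le_csSup (mixedSet_bddAbove V w) hc

lemma length_le_mixedPack (V : ℕ → List A) (K : ℕ) : (V K).length ≤ mixedPack V (V K) := by
  refine le_mixedPack ⟨1, fun _ => 0, fun _ => K, fun i hi => ?_, fun i j hij hj => by omega, ?_⟩
  · have : i = 0 := by omega
    rw [this]; exact occursIn_refl _
  · simp

lemma mixedPack_superadd (V : ℕ → List A) (a b : List A) :
    mixedPack V a + mixedPack V b ≤ mixedPack V (a ++ b) := by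
  obtain ⟨m1, s1, idx1, ho1, hd1, he1⟩ := mixedPack_mem V a
  obtain ⟨m2, s2, idx2, ho2, hd2, he2⟩ := mixedPack_mem V b
  refine le_mixedPack ⟨m1 + m2,
    fun n => if n < m1 then s1 n else a.length + s2 (n - m1),
    fun n => if n < m1 then idx1 n else idx2 (n - m1),
    fun i hi => ?_, fun i j hij hj => ?_, ?_⟩
  · by_cases h : i < m1
    · simp only [if_pos h]
      exact occursIn_append_left b (ho1 i h)
    · simp only [if_neg h]
      exact occursIn_append_right a (ho2 (i - m1) (by omega))
  · by_cases hi : i < m1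
    · by_cases hj' : j < m1
      · simp only [if_pos hi, if_pos hj']
        exact hd1 i j hij hj'
      · simp only [if_pos hi, if_neg hj']
        have := (ho1 i hi).1
        omega
    · have hj' : ¬ j < m1 := by omega
      simp only [if_neg hi, if_neg hj']
      have := hd2 (i - m1) (j - m1) (by omega) (by omega)
      omega
  · rw [Finset.sum_range_add, he1, he2]
    congr 1
    · apply Finset.sum_congr rfl
      intro i hi
      rw [Finset.mem_range] at hi
      simp only [if_pos hi]
    · apply Finset.sum_congr rfl
      intro i hi
      simp only [Nat.add_sub_cancel_left, if_neg (by omega : ¬ m1 + i < m1)]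

/-- Grouping a mixed packing by which word is used. -/
lemma mixedPack_le_sum {V : ℕ → List A} (hV : ∀ t, V t ≠ []) {u : List A} {k : ℕ}
    (hlong : ∀ t, k < t → u.length < (V t).length) :
    mixedPack V u ≤ ∑ t ∈ Finset.range (k + 1), maxDisjoint (V t) u * (V t).length := by
  obtain ⟨m, s, idx, hocc, hord, he⟩ := mixedPack_mem V u
  have hidx : ∀ i ∈ Finset.range m, idx i ∈ Finset.range (k + 1) := by
    intro i hi
    rw [Finset.mem_range] at hi ⊢
    by_contra h
    have h2 := hlong (idx i) (by omega)
    have h3 := (hocc i hi).1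
    omega
  rw [he, ← Finset.sum_fiberwise_of_maps_to hidx]
  apply Finset.sum_le_sum
  intro t ht
  set T := Finset.filter (fun i => idx i = t) (Finset.range m) with hT
  have hsum : ∑ i ∈ T, (V (idx i)).length = T.card * (V t).length := by
    rw [Finset.sum_congr rfl (fun i hi => ?_), Finset.sum_const, smul_eq_mul]
    rw [hT, Finset.mem_filter] at hi
    rw [hi.2]
  rw [hsum]
  apply Nat.mul_le_mul_right
  -- T.card disjoint occurrences of V t
  refine le_maxDisjoint (hV t) (mem_packings_iff.2 ?_)
  set e := T.orderIsoOfFin rfl with hedef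
  refine ⟨fun a => if h : a < T.card then s (e ⟨a, h⟩) else 0, fun a ha => ?_,
    fun a b hab hb => ?_⟩
  · show OccursIn (V t) u (if h : a < T.card then s (e ⟨a, h⟩) else 0)
    rw [dif_pos ha]
    have hmem : ((e ⟨a, ha⟩ : ℕ)) ∈ Finset.filter (fun i => idx i = t) (Finset.range m) :=
      (e ⟨a, ha⟩).2
    rw [Finset.mem_filter, Finset.mem_range] at hmem
    have := hocc _ hmem.1
    rwa [hmem.2] at this
  · show (if h : a < T.card then s (e ⟨a, h⟩) else 0) + (V t).length
        ≤ (if h : b < T.card then s (e ⟨b, h⟩) else 0)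
    rw [dif_pos (lt_trans hab hb), dif_pos hb]
    have hlt : (e ⟨a, lt_trans hab hb⟩ : ℕ) < (e ⟨b, hb⟩ : ℕ) := by
      have := e.strictMono (show (⟨a, lt_trans hab hb⟩ : Fin T.card) < ⟨b, hb⟩ from hab)
      exact this
    have hmema : ((e ⟨a, lt_trans hab hb⟩ : ℕ))
        ∈ Finset.filter (fun i => idx i = t) (Finset.range m) := (e ⟨a, lt_trans hab hb⟩).2
    have hmemb : ((e ⟨b, hb⟩ : ℕ))
        ∈ Finset.filter (fun i => idx i = t) (Finset.range m) := (e ⟨b, hb⟩).2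
    rw [Finset.mem_filter, Finset.mem_range] at hmema hmemb
    have := hord _ _ hlt hmemb.1
    rwa [hmema.2] at this

end MixedPack
section SETtoPQ

variable {A : Type*} [Fintype A] [TopologicalSpace A] [DiscreteTopology A]

/-- Under (SET), every packing density converges uniformly, and `ν(v)` is its (real) limit. -/
lemma SET_density_limit {Ω : Set (ℤ → A)} (hne : Ω.Nonempty) (hSET : SET (words Ω))
    {v : List A} (hv0 : v ≠ []) :
    ∃ r : ℝ, nu (words Ω) v = (r : EReal) ∧
      ∀ δ : ℝ, 0 < δ → ∃ L : ℕ, ∀ u ∈ words Ω, L ≤ u.length →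
        ((maxDisjoint v u * v.length : ℕ) : ℝ) / u.length ≤ r + δ := by
  set W := words Ω with hW
  have hlen : ∀ n : ℕ, ∃ w ∈ W, w.length = n := exists_word_of_length hne
  have hNB : (wordsFilter W).NeBot :=
    wordsFilter_neBot (fun L => (hlen L).imp fun w hw => ⟨hw.1, hw.2.ge⟩)
  set F : List A → ℝ := fun u => (u.length : ℝ) - ((maxDisjoint v u * v.length : ℕ) : ℝ)
    with hFdef
  have hFsub : IsSubadditive W F := by
    intro a b _ _ _
    have hsup := maxDisjoint_superadd hv0 a b
    have hsup' : (maxDisjoint v a + maxDisjoint v b) * v.length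
        ≤ maxDisjoint v (a ++ b) * v.length := Nat.mul_le_mul_right _ hsup
    have hsupR : ((maxDisjoint v a : ℝ) + (maxDisjoint v b : ℝ)) * (v.length : ℝ)
        ≤ (maxDisjoint v (a ++ b) : ℝ) * (v.length : ℝ) := by exact_mod_cast hsup'
    simp only [hFdef]
    rw [List.length_append]
    push_cast
    nlinarith [hsupR]
  have htend := hSET F hFsub
  set Λv : EReal := ⨅ n : {n : ℕ // 1 ≤ n}, ((wordSup W F n.1 : ℝ) : EReal) with hΛvdef
  have hev01 : ∀ᶠ u in wordsFilter W, 0 ≤ F u / u.length ∧ F u / u.length ≤ 1 := by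
    rw [eventually_wordsFilter]
    refine ⟨1, fun u hu h1 => ?_⟩
    have hupos : (0 : ℝ) < u.length := by exact_mod_cast h1
    have hmle : ((maxDisjoint v u * v.length : ℕ) : ℝ) ≤ u.length := by
      exact_mod_cast maxDisjoint_mul_le hv0
    have hFpos : 0 ≤ F u := by rw [hFdef]; simp only; linarith
    have hFle : F u ≤ u.length := by
      rw [hFdef]; simp only
      have : (0 : ℝ) ≤ ((maxDisjoint v u * v.length : ℕ) : ℝ) := Nat.cast_nonneg _
      linarith
    exact ⟨div_nonneg hFpos hupos.le, (div_le_one hupos).2 hFle⟩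
  have hge : (0 : EReal) ≤ Λv := by
    refine ge_of_tendsto htend ?_
    filter_upwards [hev01] with u hu
    rw [show (0 : EReal) = ((0 : ℝ) : EReal) from rfl]
    exact EReal.coe_le_coe_iff.2 hu.1
  have hle1 : Λv ≤ (1 : EReal) := by
    refine le_of_tendsto htend ?_
    filter_upwards [hev01] with u hu
    rw [show (1 : EReal) = ((1 : ℝ) : EReal) from rfl]
    exact EReal.coe_le_coe_iff.2 hu.2
  have hbot : Λv ≠ ⊥ := by
    intro h
    rw [h] at hge
    exact absurd hge (by simp [show ((0:ℝ):EReal) ≠ ⊥ from EReal.coe_ne_bot 0])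
  have htop : Λv ≠ ⊤ := by
    intro h
    rw [h] at hle1
    have h1t : (1 : EReal) < ⊤ := by
      rw [show (1 : EReal) = ((1 : ℝ) : EReal) from rfl]
      exact EReal.coe_lt_top 1
    exact absurd hle1 (not_le.2 h1t)
  set lamv : ℝ := Λv.toReal with hlamvdef
  have hΛveq : Λv = (lamv : EReal) := (EReal.coe_toReal htop hbot).symm
  rw [hΛveq] at htend
  have htendR : Filter.Tendsto (fun u => F u / u.length) (wordsFilter W) (nhds lamv) :=
    EReal.tendsto_coe.1 htend
  set dens : List A → ℝ := fun u => ((maxDisjoint v u * v.length : ℕ) : ℝ) / u.length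
    with hdensdef
  have heq : (fun u => 1 - F u / u.length) =ᶠ[wordsFilter W] dens := by
    rw [Filter.EventuallyEq, eventually_wordsFilter]
    refine ⟨1, fun u hu h1 => ?_⟩
    have hupos : (0 : ℝ) < u.length := by exact_mod_cast h1
    rw [hFdef, hdensdef]
    simp only
    field_simp
    ring
  have htendD : Filter.Tendsto dens (wordsFilter W) (nhds (1 - lamv)) :=
    (Filter.Tendsto.sub tendsto_const_nhds htendR).congr' heq
  refine ⟨1 - lamv, ?_, ?_⟩
  · have : Filter.Tendsto (fun u => ((dens u : ℝ) : EReal)) (wordsFilter W)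
        (nhds ((1 - lamv : ℝ) : EReal)) := EReal.tendsto_coe.2 htendD
    exact this.liminf_eq
  · intro δ hδ
    have := (Metric.tendsto_nhds.1 htendD) δ hδ
    rw [eventually_wordsFilter] at this
    obtain ⟨L, hL⟩ := this
    refine ⟨L, fun u hu hLu => ?_⟩
    have := hL u hu hLu
    rw [Real.dist_eq, abs_sub_lt_iff] at this
    have h2 := this.1
    show dens u ≤ 1 - lamv + δ
    linarith

/-- If (PQ) fails, then there are words of arbitrarily large length with small `ν`. -/
lemma exists_small_nu {Ω : Set (ℤ → A)} (hΩ : IsSubshift Ω) (hmin : IsMinimal Ω)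
    (hnPQ : ∀ C : ℝ, 0 < C → ∃ v ∈ words Ω, v ≠ [] ∧ nu (words Ω) v < (C : EReal)) :
    ∀ (C : ℝ), 0 < C → ∀ M : ℕ, ∃ v ∈ words Ω, v ≠ [] ∧ M < v.length ∧
      nu (words Ω) v < (C : EReal) := by
  intro C hC M
  have hSfin : {v : List A | v ∈ words Ω ∧ v ≠ [] ∧ v.length ≤ M}.Finite :=
    (List.finite_length_le A M).subset (fun v hv => hv.2.2)
  set T := hSfin.toFinset with hTdef
  by_cases hTne : T.Nonempty
  · have hc : ∀ v ∈ T, ∃ c : ℝ, 0 < c ∧ (c : EReal) ≤ nu (words Ω) v := by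
      intro v hv
      rw [hTdef, Set.Finite.mem_toFinset] at hv
      exact nu_pos hΩ hmin hv.1 hv.2.1
    choose! c hc1 hc2 using hc
    set cmin := T.inf' hTne c with hcmindef
    have hcmin_pos : 0 < cmin := (Finset.lt_inf'_iff hTne).2 (fun v hv => hc1 v hv)
    obtain ⟨v, hv, hv0, hnu⟩ := hnPQ (min C cmin) (lt_min hC hcmin_pos)
    refine ⟨v, hv, hv0, ?_, lt_of_lt_of_le hnu (EReal.coe_le_coe_iff.2 (min_le_left _ _))⟩
    by_contra hM
    push_neg at hM
    have hvT : v ∈ T := by rw [hTdef, Set.Finite.mem_toFinset]; exact ⟨hv, hv0, hM⟩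
    have h1 : (cmin : EReal) ≤ nu (words Ω) v :=
      le_trans (EReal.coe_le_coe_iff.2 (Finset.inf'_le c hvT)) (hc2 v hvT)
    have h2 : nu (words Ω) v < (cmin : EReal) :=
      lt_of_lt_of_le hnu (EReal.coe_le_coe_iff.2 (min_le_right _ _))
    exact absurd (lt_of_le_of_lt h1 h2) (lt_irrefl _)
  · obtain ⟨v, hv, hv0, hnu⟩ := hnPQ C hC
    refine ⟨v, hv, hv0, ?_, hnu⟩
    by_contra hM
    push_neg at hM
    exact hTne ⟨v, by rw [hTdef, Set.Finite.mem_toFinset]; exact ⟨hv, hv0, hM⟩⟩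

/-- The recursive step in the construction of the bad family. -/
lemma step_exists {Ω : Set (ℤ → A)} (hΩ : IsSubshift Ω) (hne : Ω.Nonempty)
    (hmin : IsMinimal Ω) (hSET : SET (words Ω))
    (hnPQ : ∀ C : ℝ, 0 < C → ∃ v ∈ words Ω, v ≠ [] ∧ nu (words Ω) v < (C : EReal)) :
    ∀ k M : ℕ, ∃ (v : List A) (M' : ℕ), v ∈ words Ω ∧ v ≠ [] ∧ M < v.length ∧
      M < M' ∧ k < M' ∧
      ∀ u ∈ words Ω, M' ≤ u.length →
        ((maxDisjoint v u * v.length : ℕ) : ℝ) * 2 ^ (k + 3) ≤ u.length := by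
  intro k M
  set δ : ℝ := (1/2 : ℝ) ^ (k + 4) with hδdef
  have hδpos : 0 < δ := by positivity
  obtain ⟨v, hv, hv0, hvlen, hnu⟩ := exists_small_nu hΩ hmin hnPQ δ hδpos M
  obtain ⟨r, hreq, hrbd⟩ := SET_density_limit hne hSET hv0
  have hrδ : r < δ := by
    rw [hreq] at hnu
    exact EReal.coe_lt_coe_iff.1 hnu
  obtain ⟨L, hL⟩ := hrbd δ hδpos
  refine ⟨v, max (max (M + 1) (k + 1)) (max L 1), hv, hv0, hvlen, by omega, by omega,
    fun u hu hLu => ?_⟩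
  have hLu' : L ≤ u.length := by omega
  have hu1 : 1 ≤ u.length := by omega
  have hupos : (0 : ℝ) < u.length := by exact_mod_cast hu1
  have hdens := hL u hu hLu'
  have h2δ : r + δ ≤ 2 * δ := by linarith
  have hD : ((maxDisjoint v u * v.length : ℕ) : ℝ) ≤ 2 * δ * u.length := by
    rw [div_le_iff₀ hupos] at hdens
    nlinarith [hdens]
  have hpow : (2 : ℝ) * δ * 2 ^ (k + 3) = 1 := by
    rw [hδdef]
    rw [show (1/2 : ℝ) = 2⁻¹ by norm_num, inv_pow]
    rw [show k + 4 = (k + 3) + 1 by ring]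
    field_simp
    ring
  have h2pow : (0 : ℝ) < 2 ^ (k + 3) := by positivity
  calc ((maxDisjoint v u * v.length : ℕ) : ℝ) * 2 ^ (k + 3)
      ≤ (2 * δ * u.length) * 2 ^ (k + 3) := by nlinarith [hD]
    _ = (2 * δ * 2 ^ (k + 3)) * u.length := by ring
    _ = u.length := by rw [hpow]; ring

lemma geom_tail_bound (n : ℕ) : ∑ t ∈ Finset.range n, ((1:ℝ)/2) ^ (t + 3) ≤ 1/4 := by
  have h1 : ∀ t, ((1:ℝ)/2) ^ (t + 3) = (1/8) * (1/2) ^ t := by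
    intro t
    rw [pow_add]
    norm_num
    ring
  rw [Finset.sum_congr rfl (fun t _ => h1 t), ← Finset.mul_sum]
  have h2 : ∑ t ∈ Finset.range n, ((1:ℝ)/2) ^ t ≤ 2 := by
    rw [geom_sum_eq (by norm_num : (1:ℝ)/2 ≠ 1)]
    have h3 : (0:ℝ) ≤ (1/2) ^ n := by positivity
    have h4 : ((1:ℝ)/2) ^ n ≤ 1 := pow_le_one₀ (by norm_num) (by norm_num)
    rw [div_le_iff_of_neg (by norm_num : (1:ℝ)/2 - 1 < 0)]
    linarith
  linarith

theorem SET_imp_PQ {Ω : Set (ℤ → A)} (hΩ : IsSubshift Ω) (hne : Ω.Nonempty)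
    (hmin : IsMinimal Ω) (hSET : SET (words Ω)) : PQ (words Ω) := by
  by_contra hnPQ0
  have hnPQ : ∀ C : ℝ, 0 < C → ∃ v ∈ words Ω, v ≠ [] ∧ nu (words Ω) v < (C : EReal) := by
    intro C hC
    by_contra hcon
    push_neg at hcon
    exact hnPQ0 ⟨C, hC, fun v hv hv0 => hcon v hv hv0⟩
  set W := words Ω with hWdef
  have hlen : ∀ n : ℕ, ∃ w ∈ W, w.length = n := exists_word_of_length hne
  obtain ⟨fv, fM, hP1, hP2, hP3, hP4, hP5, hP6⟩ :
      ∃ (fv : ℕ → ℕ → List A) (fM : ℕ → ℕ → ℕ),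
        (∀ k M, fv k M ∈ W) ∧ (∀ k M, fv k M ≠ []) ∧ (∀ k M, M < (fv k M).length) ∧
        (∀ k M, M < fM k M) ∧ (∀ k M, k < fM k M) ∧
        (∀ k M, ∀ u ∈ W, fM k M ≤ u.length →
          ((maxDisjoint (fv k M) u * (fv k M).length : ℕ) : ℝ) * 2 ^ (k + 3) ≤ u.length) := by
    have h := step_exists hΩ hne hmin hSET hnPQ
    choose fv fM h1 h2 h3 h4 h5 h6 using h
    exact ⟨fv, fM, h1, h2, h3, h4, h5, h6⟩
  -- the recursively defined sequence
  set g : ℕ → List A × ℕ :=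
    fun n => Nat.rec (fv 0 0, fM 0 0) (fun k ih => (fv (k+1) ih.2, fM (k+1) ih.2)) n
    with hgdef
  set V : ℕ → List A := fun n => (g n).1 with hVdef
  set M : ℕ → ℕ := fun n => (g n).2 with hMdef
  have hVW : ∀ k, V k ∈ W := by
    intro k; cases k with
    | zero => exact hP1 0 0
    | succ n => exact hP1 (n+1) (g n).2
  have hV0 : ∀ k, V k ≠ [] := by
    intro k; cases k with
    | zero => exact hP2 0 0
    | succ n => exact hP2 (n+1) (g n).2
  have hbound : ∀ k, ∀ u ∈ W, M k ≤ u.length →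
      ((maxDisjoint (V k) u * (V k).length : ℕ) : ℝ) * 2 ^ (k + 3) ≤ u.length := by
    intro k; cases k with
    | zero => exact hP6 0 0
    | succ n => exact hP6 (n+1) (g n).2
  have hMk : ∀ k, k < M k := by
    intro k; cases k with
    | zero => exact hP5 0 0
    | succ n => exact hP5 (n+1) (g n).2
  have hMmono : ∀ k, M k < M (k+1) := fun k => hP4 (k+1) (g k).2
  have hMle : ∀ i k, i ≤ k → M i ≤ M k := by
    have : Monotone M := monotone_nat_of_le_succ fun k => (hMmono k).le
    exact fun i k h => this h
  have hVlen : ∀ k, M k < (V (k+1)).length := fun k => hP3 (k+1) (g k).2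
  -- the subadditive function built from the mixed packing
  set F : List A → ℝ := fun w => (w.length : ℝ) - (mixedPack V w : ℕ) with hFdef
  have hFsub : IsSubadditive W F := by
    intro a b _ _ _
    have hsup := mixedPack_superadd V a b
    have hsup' : ((mixedPack V a + mixedPack V b : ℕ) : ℝ) ≤ (mixedPack V (a ++ b) : ℕ) := by
      exact_mod_cast hsup
    simp only [hFdef]
    rw [List.length_append]
    push_cast
    push_cast at hsup'
    linarith
  have htend := hSET F hFsub
  set Λ : EReal := ⨅ n : {n : ℕ // 1 ≤ n}, ((wordSup W F n.1 : ℝ) : EReal) with hΛdef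
  -- frequently the value is 0
  have hfreq0 : ∃ᶠ w in wordsFilter W,
      (fun w => ((F w / (w.length : ℝ) : ℝ) : EReal)) w ∈ ({(0 : EReal)} : Set EReal) := by
    rw [Filter.frequently_iff]
    intro S hS
    obtain ⟨L, hL⟩ := mem_wordsFilter.1 hS
    have hlenVL : L ≤ (V (L+1)).length := by
      have h1 := hVlen L
      have h2 := hMk L
      omega
    refine ⟨V (L+1), hL (V (L+1)) (hVW (L+1)) hlenVL, ?_⟩
    have h1 := mixedPack_le V (V (L+1))
    have h2 := length_le_mixedPack V (L+1)
    have h3 : mixedPack V (V (L+1)) = (V (L+1)).length := le_antisymm h1 h2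
    have h4 : F (V (L+1)) = 0 := by
      rw [hFdef]; simp only; rw [h3]; ring
    simp [h4]
  have hΛ0 : Λ = 0 := by
    have := mem_closure_of_frequently_of_tendsto hfreq0 htend
    rwa [closure_singleton, Set.mem_singleton_iff] at this
  -- frequently the value is at least 3/4
  have hfreq34 : ∃ᶠ w in wordsFilter W,
      (fun w => ((F w / (w.length : ℝ) : ℝ) : EReal)) w ∈ Set.Ici (((3/4 : ℝ)) : EReal) := by
    rw [Filter.frequently_iff]
    intro S hS
    obtain ⟨L, hL⟩ := mem_wordsFilter.1 hS
    obtain ⟨u, hu, hulen⟩ := hlen (M L)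
    have huL : L ≤ u.length := by
      have := hMk L; omega
    refine ⟨u, hL u hu huL, ?_⟩
    have hu1 : 1 ≤ u.length := by
      have := hMk L; omega
    have hupos : (0 : ℝ) < u.length := by exact_mod_cast hu1
    -- bound the mixed packing of u
    have hlong : ∀ t, L < t → u.length < (V t).length := by
      intro t ht
      have h1 : M (t-1) < (V t).length := by
        have := hVlen (t-1)
        rwa [show t - 1 + 1 = t by omega] at this
      have h2 : M L ≤ M (t-1) := hMle L (t-1) (by omega)
      omega
    have hPle := mixedPack_le_sum (V := V) hV0 (u := u) (k := L) hlong
    have hsum : ((mixedPack V u : ℕ) : ℝ) ≤ (u.length : ℝ) / 4 := by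
      have hc1 : ((mixedPack V u : ℕ) : ℝ)
          ≤ ∑ t ∈ Finset.range (L + 1), (maxDisjoint (V t) u : ℝ) * ((V t).length : ℝ) := by
        exact_mod_cast hPle
      have hc2 : ∀ t ∈ Finset.range (L + 1),
          (maxDisjoint (V t) u : ℝ) * ((V t).length : ℝ)
            ≤ (u.length : ℝ) * ((1:ℝ)/2) ^ (t + 3) := by
        intro t hT
        rw [Finset.mem_range] at hT
        have hMt : M t ≤ u.length := by
          rw [hulen]; exact hMle t L (by omega)
        have hb := hbound t u hu hMt
        push_cast at hb
        have h2p : (0:ℝ) < 2 ^ (t + 3) := by positivity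
        have hhalf : ((1:ℝ)/2) ^ (t + 3) = 1 / 2 ^ (t + 3) := by
          rw [div_pow]; norm_num
        rw [hhalf, mul_one_div, le_div_iff₀ h2p]
        linarith
      have hc3 : ∑ t ∈ Finset.range (L + 1), (maxDisjoint (V t) u : ℝ) * ((V t).length : ℝ)
          ≤ (u.length : ℝ) * ∑ t ∈ Finset.range (L + 1), ((1:ℝ)/2) ^ (t + 3) := by
        rw [Finset.mul_sum]
        exact Finset.sum_le_sum hc2
      have hc4 := geom_tail_bound (L + 1)
      have : (u.length : ℝ) * ∑ t ∈ Finset.range (L + 1), ((1:ℝ)/2) ^ (t + 3)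
          ≤ (u.length : ℝ) * (1/4) := by
        apply mul_le_mul_of_nonneg_left hc4 hupos.le
      calc ((mixedPack V u : ℕ) : ℝ) ≤ _ := hc1
        _ ≤ _ := hc3
        _ ≤ (u.length : ℝ) * (1/4) := this
        _ = (u.length : ℝ) / 4 := by ring
    rw [Set.mem_Ici]
    have hval : (3/4 : ℝ) ≤ F u / u.length := by
      rw [hFdef]
      simp only
      rw [le_div_iff₀ hupos]
      linarith
    exact EReal.coe_le_coe_iff.2 hval
  have h34 : ((3/4 : ℝ) : EReal) ≤ Λ := by
    have := mem_closure_of_frequently_of_tendsto hfreq34 htend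
    rwa [IsClosed.closure_eq isClosed_Ici, Set.mem_Ici] at this
  rw [hΛ0] at h34
  rw [show (0 : EReal) = ((0 : ℝ) : EReal) from rfl] at h34
  have := EReal.coe_le_coe_iff.1 h34
  norm_num at this

end SETtoPQ

/-- For a minimal subshift, the uniform subadditive ergodic theorem (SET)
holds if and only if (PQ) holds. -/
theorem SET_iff_PQ
    {A : Type*} [Fintype A] [Nonempty A] [TopologicalSpace A] [DiscreteTopology A]
    (Ω : Set (ℤ → A)) (hΩ : IsSubshift Ω) (hne : Ω.Nonempty) (hmin : IsMinimal Ω) :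
    SET (words Ω) ↔ PQ (words Ω) :=
  ⟨fun h => SET_imp_PQ hΩ hne hmin h, fun h => PQ_imp_SET hne h⟩

end SubshiftErgodic
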